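/- Let μ be a probability measure on X, ε, δ ∈ (0,1), and T(i) = ⌈(1/ε)(i·ln 2 − ln δ)⌉. Suppose in each round i = 1, …, m a (possibly adaptively chosen) measurable set V_i ⊆ X with μ(V_i) ≥ ε is tested against T(i) fresh i.i.d. samples from μ. Then the probability that at least one round's samples entirely miss its set V_i is at most δ. -/

import Mathlib

open MeasureTheory

lemma pacX_eval_pi (ι : Type*) [Fintype ι] (α : ι → Type*) [∀ i, MeasurableSpace (α i)]
    (ν : ∀ i, Measure (α i)) [∀ i, IsProbabilityMeasure (ν i)] (i : ι)
    (s : Set (α i)) :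
    Measure.pi ν (Function.eval i ⁻¹' s) = ν i s := by
  classical
  rw [Set.eval_preimage, Measure.pi_pi]
  rw [Finset.prod_eq_single i]
  · simp
  · intro j _ hj; simp [Function.update_apply, hj]
  · simp

theorem pacX_union_bound (X : Type*) [MeasurableSpace X] (μ : Measure X)
    [IsProbabilityMeasure μ] (ε δ : ℝ) (hε : ε ∈ Set.Ioo (0:ℝ) 1) (hδ : δ ∈ Set.Ioo (0:ℝ) 1)
    (T : ℕ → ℕ) (hT : ∀ i : ℕ, (T i : ℤ) = ⌈(1 / ε) * (i * Real.log 2 - Real.log δ)⌉)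
    (m : ℕ) (V : Fin m → Set X) (hVmeas : ∀ i, MeasurableSet (V i))
    (hVbig : ∀ i : Fin m, ENNReal.ofReal ε ≤ μ (V i)) :
    (Measure.pi (fun i : Fin m => Measure.pi (fun _ : Fin (T (i.1 + 1)) => μ)))
      {ω | ∃ i : Fin m, ∀ j : Fin (T (i.1 + 1)), ω i j ∉ V i} ≤ ENNReal.ofReal δ := by
  obtain ⟨hε0, hε1⟩ := hε
  obtain ⟨hδ0, hδ1⟩ := hδ
  -- Key analytic per-round bound
  have key : ∀ i : ℕ, (1 - ε) ^ (T (i + 1)) ≤ δ * (1/2) ^ (i + 1) := by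
    intro i
    set t := T (i + 1) with ht_def
    have hceil : (1 / ε) * ((i + 1 : ℕ) * Real.log 2 - Real.log δ) ≤ (t : ℝ) := by
      have h := Int.le_ceil ((1 / ε) * ((i + 1 : ℕ) * Real.log 2 - Real.log δ))
      rw [← hT (i + 1)] at h
      exact_mod_cast h
    have hεt : ((i:ℝ) + 1) * Real.log 2 - Real.log δ ≤ ε * t := by
      rw [one_div, inv_mul_le_iff₀ hε0] at hceil
      push_cast at hceil
      linarith
    have h1 : (1 - ε) ^ t ≤ Real.exp (-(ε * t)) := by
      have hb : 1 - ε ≤ Real.exp (-ε) := by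
        have := Real.add_one_le_exp (-ε); linarith
      calc (1 - ε) ^ t ≤ (Real.exp (-ε)) ^ t :=
            pow_le_pow_left₀ (by linarith) hb t
        _ = Real.exp (-(ε * t)) := by
            rw [← Real.exp_nat_mul]; ring_nf
    have h2 : Real.exp (-(ε * t)) ≤ Real.exp (Real.log δ - ((i:ℝ) + 1) * Real.log 2) := by
      apply Real.exp_le_exp.mpr; linarith
    have h3 : Real.exp (Real.log δ - ((i:ℝ) + 1) * Real.log 2) = δ * (1/2) ^ (i + 1) := by
      rw [Real.exp_sub, Real.exp_log hδ0]
      have : Real.exp (((i:ℝ) + 1) * Real.log 2) = 2 ^ (i + 1) := by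
        have : ((i:ℝ) + 1) = ((i + 1 : ℕ) : ℝ) := by push_cast; ring
        rw [this, Real.exp_nat_mul, Real.exp_log two_pos]
      rw [this]
      field_simp
      rw [← mul_pow]; norm_num
    calc (1 - ε) ^ t ≤ Real.exp (-(ε * t)) := h1
      _ ≤ _ := h2
      _ = δ * (1/2) ^ (i + 1) := h3
  -- rewrite as a union
  have hset : {ω : (i : Fin m) → Fin (T (i.1 + 1)) → X |
      ∃ i : Fin m, ∀ j : Fin (T (i.1 + 1)), ω i j ∉ V i} =
      ⋃ i : Fin m, Function.eval i ⁻¹'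
        (Set.pi Set.univ fun _ : Fin (T (i.1 + 1)) => (V i)ᶜ) := by
    ext ω; simp [Set.mem_pi, Function.eval]
  rw [hset]
  refine le_trans (measure_iUnion_le _) ?_
  have hAi : ∀ i : Fin m,
      (Measure.pi fun i : Fin m => Measure.pi fun _ : Fin (T (i.1 + 1)) => μ)
        (Function.eval i ⁻¹' (Set.pi Set.univ fun _ : Fin (T (i.1 + 1)) => (V i)ᶜ))
        ≤ ENNReal.ofReal (δ * (1/2) ^ (i.1 + 1)) := by
    intro i
    rw [pacX_eval_pi, Measure.pi_pi, Finset.prod_const]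
    have hc : μ (V i)ᶜ ≤ ENNReal.ofReal (1 - ε) := by
      rw [measure_compl (hVmeas i) (measure_ne_top μ _), measure_univ]
      calc 1 - μ (V i) ≤ 1 - ENNReal.ofReal ε := tsub_le_tsub_left (hVbig i) 1
        _ = ENNReal.ofReal (1 - ε) := by
            rw [← ENNReal.ofReal_one, ← ENNReal.ofReal_sub _ hε0.le]
    simp only [Finset.card_univ, Fintype.card_fin]
    calc μ (V i)ᶜ ^ (T (i.1 + 1)) ≤ ENNReal.ofReal (1 - ε) ^ (T (i.1 + 1)) :=
          pow_le_pow_left' hc _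
      _ = ENNReal.ofReal ((1 - ε) ^ (T (i.1 + 1))) := (ENNReal.ofReal_pow (by linarith) _).symm
      _ ≤ ENNReal.ofReal (δ * (1/2) ^ (i.1 + 1)) := ENNReal.ofReal_le_ofReal (key i.1)
  calc (∑' i : Fin m, _) = ∑ i : Fin m,
        (Measure.pi fun i : Fin m => Measure.pi fun _ : Fin (T (i.1 + 1)) => μ)
          (Function.eval i ⁻¹' (Set.pi Set.univ fun _ : Fin (T (i.1 + 1)) => (V i)ᶜ)) :=
        tsum_fintype _
    _ ≤ ∑ i : Fin m, ENNReal.ofReal (δ * (1/2) ^ (i.1 + 1)) := Finset.sum_le_sum fun i _ => hAi i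
    _ = ENNReal.ofReal (∑ i : Fin m, δ * (1/2) ^ (i.1 + 1)) := by
        rw [ENNReal.ofReal_sum_of_nonneg]
        intro i _
        positivity
    _ ≤ ENNReal.ofReal δ := by
        apply ENNReal.ofReal_le_ofReal
        have : ∑ i : Fin m, δ * (1/2 : ℝ) ^ (i.1 + 1) = δ * ∑ i ∈ Finset.range m, (1/2 : ℝ) ^ (i + 1) := by
          rw [Finset.mul_sum, ← Fin.sum_univ_eq_sum_range (fun i => δ * (1/2 : ℝ) ^ (i + 1))]
        rw [this]
        have hs : ∑ i ∈ Finset.range m, (1/2 : ℝ) ^ (i + 1) ≤ 1 := by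
          have := sum_geometric_two_le m
          calc ∑ i ∈ Finset.range m, (1/2 : ℝ) ^ (i + 1)
              = (1/2) * ∑ i ∈ Finset.range m, (1/2 : ℝ) ^ i := by
                rw [Finset.mul_sum]; exact Finset.sum_congr rfl fun i _ => by ring
            _ ≤ (1/2) * 2 := by linarith
            _ = 1 := by norm_num
        nlinarith
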